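/- Let A, B ∈ F₂[[q]] be odd, let n ∈ ℕ, and let U, V ∈ F₂[[q]] with V odd. Then T_{A,B}^n(U + q^n V) and T_{A,B}^n(U) have opposite parity; that is, the constant coefficients of T_{A,B}^n(U + q^n V) and T_{A,B}^n(U) are distinct. -/

import Mathlib

open PowerSeries
open scoped Classical

/-- Shift map on `F₂[[q]]`: equals `x / q` whenever `q ∣ x`. -/
noncomputable def divq (x : PowerSeries (ZMod 2)) : PowerSeries (ZMod 2) :=
  PowerSeries.mk fun n => PowerSeries.coeff (R := ZMod 2) (n + 1) x

/-- `T_{A,B}(x) = x/q` if `q ∣ x`, and `(A*x + B)/q` otherwise.  (When `A`, `B`, `x` are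
all odd, `A*x + B` is divisible by `q`, so `divq` computes the true quotient there.) -/
noncomputable def Tab (A B x : PowerSeries (ZMod 2)) : PowerSeries (ZMod 2) :=
  if X ∣ x then divq x else divq (A * x + B)

lemma divq_add (x y : PowerSeries (ZMod 2)) : divq (x + y) = divq x + divq y := by
  ext n
  simp [divq]

lemma divq_X_mul (w : PowerSeries (ZMod 2)) : divq (X * w) = w := by
  ext n
  simp [divq, PowerSeries.coeff_succ_X_mul]

lemma Tab_add_step (A B : PowerSeries (ZMod 2))
    (hA : PowerSeries.constantCoeff (R := ZMod 2) A = 1)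
    (n : ℕ) (U V : PowerSeries (ZMod 2))
    (hV : PowerSeries.constantCoeff (R := ZMod 2) V = 1) :
    ∃ W : PowerSeries (ZMod 2), PowerSeries.constantCoeff (R := ZMod 2) W = 1 ∧
      Tab A B (U + X ^ (n + 1) * V) = Tab A B U + X ^ n * W := by
  have hdvd : (X : PowerSeries (ZMod 2)) ∣ X ^ (n + 1) * V :=
    Dvd.dvd.mul_right (dvd_pow_self _ (Nat.succ_ne_zero n)) V
  by_cases hU : (X : PowerSeries (ZMod 2)) ∣ U
  · refine ⟨V, hV, ?_⟩
    have h1 : (X : PowerSeries (ZMod 2)) ∣ U + X ^ (n + 1) * V := dvd_add hU hdvd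
    rw [Tab, Tab, if_pos h1, if_pos hU, divq_add]
    have : (X : PowerSeries (ZMod 2)) ^ (n + 1) * V = X * (X ^ n * V) := by ring
    rw [this, divq_X_mul]
  · refine ⟨A * V, by simp [hA, hV], ?_⟩
    have h1 : ¬ (X : PowerSeries (ZMod 2)) ∣ U + X ^ (n + 1) * V := by
      intro h
      exact hU (by simpa using dvd_sub h hdvd)
    rw [Tab, Tab, if_neg h1, if_neg hU]
    have : A * (U + X ^ (n + 1) * V) + B = (A * U + B) + X * (X ^ n * (A * V)) := by ring
    rw [this, divq_add, divq_X_mul]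

/-- For odd `A, B, V` and any `U`, the `n`-th iterates `T_{A,B}^n(U + q^n V)` and
`T_{A,B}^n(U)` have opposite parity. -/
theorem Tab_iterate_add_qpow_parity_ne (A B : PowerSeries (ZMod 2))
    (hA : PowerSeries.constantCoeff (R := ZMod 2) A = 1)
    (hB : PowerSeries.constantCoeff (R := ZMod 2) B = 1)
    (n : ℕ) (U V : PowerSeries (ZMod 2))
    (hV : PowerSeries.constantCoeff (R := ZMod 2) V = 1) :
    PowerSeries.constantCoeff (R := ZMod 2) ((Tab A B)^[n] (U + X ^ n * V)) ≠
      PowerSeries.constantCoeff (R := ZMod 2) ((Tab A B)^[n] U) := by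
  induction n generalizing U V with
  | zero =>
    simp only [Function.iterate_zero, id_eq, pow_zero, one_mul, map_add, hV]
    intro h
    have : (1 : ZMod 2) = 0 := by
      have := add_eq_left.mp h
      exact this
    exact one_ne_zero this
  | succ n ih =>
    obtain ⟨W, hW, hstep⟩ := Tab_add_step A B hA n U V hV
    rw [Function.iterate_succ_apply, Function.iterate_succ_apply, hstep]
    exact ih (Tab A B U) W hW
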